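/- arXiv:2303.15279 — 6 statements merged into one kernel-verified Lean document; each statement's English description precedes it below -/
import Mathlib

section
/- For a functor F with a partial order on each FX such that Ff is monotone, a map f : X → Y, and a relation S ⊆ Y × Y, the uncertain relation lifting satisfies F̂_⊑((f × f)⁻¹(S)) ⊆ (Ff × Ff)⁻¹(F̂_⊑(S)). -/
universe u

/-- The canonical relation lifting of a `Set`-functor `F` (given by its action
on objects and morphisms): `F̂(R) = {(Fπ₁ t, Fπ₂ t) | t ∈ F R}`. -/
def RelLift (F : Type u → Type u)
    (Fmap : ∀ {X Y : Type u}, (X → Y) → F X → F Y)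
    {X : Type u} (R : Set (X × X)) : Set (F X × F X) :=
  {p | ∃ t : F ↥R, Fmap (fun r : ↥R => (r : X × X).1) t = p.1 ∧
       Fmap (fun r : ↥R => (r : X × X).2) t = p.2}

/-- The uncertain relation lifting `F̂_⊑(R) = (⊑) ∘ F̂(R) ∘ (⊒)`:
`(x, y) ∈ F̂_⊑(R)` iff there are `a, b` with `x ⊑ a`, `(a, b) ∈ F̂(R)` and `y ⊑ b`. -/
def UncLift (F : Type u → Type u)
    (Fmap : ∀ {X Y : Type u}, (X → Y) → F X → F Y)
    (le : ∀ {X : Type u}, F X → F X → Prop)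
    {X : Type u} (R : Set (X × X)) : Set (F X × F X) :=
  {p | ∃ a b : F X, le p.1 a ∧ (a, b) ∈ RelLift F (fun {X Y} => @Fmap X Y) R ∧ le p.2 b}

/-- The uncertain relation lifting laxly preserves inverse images. -/
theorem stmt_7 (F : Type u → Type u)
    (Fmap : ∀ {X Y : Type u}, (X → Y) → F X → F Y)
    (hid : ∀ {X : Type u} (t : F X), Fmap id t = t)
    (hcomp : ∀ {X Y Z : Type u} (f : X → Y) (g : Y → Z) (t : F X),
      Fmap (g ∘ f) t = Fmap g (Fmap f t))
    (le : ∀ {X : Type u}, F X → F X → Prop)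
    (hrefl : ∀ {X : Type u} (a : F X), le a a)
    (htrans : ∀ {X : Type u} (a b c : F X), le a b → le b c → le a c)
    (hanti : ∀ {X : Type u} (a b : F X), le a b → le b a → a = b)
    (hmono : ∀ {X Y : Type u} (f : X → Y) (a b : F X), le a b → le (Fmap f a) (Fmap f b))
    {X Y : Type u} (f : X → Y) (S : Set (Y × Y)) :
    UncLift F (fun {X Y} => @Fmap X Y) (fun {X} => @le X) (Prod.map f f ⁻¹' S) ⊆
      Prod.map (Fmap f) (Fmap f) ⁻¹'
        UncLift F (fun {X Y} => @Fmap X Y) (fun {X} => @le X) S := by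
  rintro ⟨x, y⟩ ⟨a, b, hxa, ⟨t, ht1, ht2⟩, hyb⟩
  have ht1' : Fmap (fun r : ↥(Prod.map f f ⁻¹' S) => (r : X × X).1) t = a := ht1
  have ht2' : Fmap (fun r : ↥(Prod.map f f ⁻¹' S) => (r : X × X).2) t = b := ht2
  refine ⟨Fmap f a, Fmap f b, hmono f x a hxa, ?_, hmono f y b hyb⟩
  refine ⟨Fmap (fun r : ↥(Prod.map f f ⁻¹' S) => (⟨(f (r : X × X).1, f (r : X × X).2), r.2⟩ : ↥S)) t, ?_, ?_⟩
  · show Fmap (fun r : ↥S => (r : Y × Y).1)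
        (Fmap (fun r : ↥(Prod.map f f ⁻¹' S) =>
          (⟨(f (r : X × X).1, f (r : X × X).2), r.2⟩ : ↥S)) t) = Fmap f a
    rw [← hcomp, ← ht1', ← hcomp]
    rfl
  · show Fmap (fun r : ↥S => (r : Y × Y).2)
        (Fmap (fun r : ↥(Prod.map f f ⁻¹' S) =>
          (⟨(f (r : X × X).1, f (r : X × X).2), r.2⟩ : ↥S)) t) = Fmap f b
    rw [← hcomp, ← ht2', ← hcomp]
    rfl
end

section
/- The final coalgebra of the partial Mealy functor M X = (I ⇀ O × X) is carried by the set of partial functions f : I⁺ ⇀ O on nonempty words that are 'monotone in definedness': for all prefixes v ≤ w of nonempty words, if f(w) is defined then f(v) is defined; with structure map τ(f)(i) = undefined if f(i) is undefined, and τ(f)(i) = (f(i), w ↦ f(i·w)) otherwise. -/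
universe u

/-- The partial Mealy functor `M X = (I ⇀ O × X)` on objects. -/
def MFun (I O X : Type u) : Type u := I → Option (O × X)

/-- The action of the partial Mealy functor on morphisms. -/
def Mmap {I O X Y : Type u} (f : X → Y) (s : MFun I O X) : MFun I O Y :=
  fun i => (s i).map (fun p => (p.1, f p.2))

/-- The flat pointwise order on `M X`: `t ⊑ s` iff each `t i` is undefined or
agrees with `s i`. -/
def Mle {I O X : Type u} (t s : MFun I O X) : Prop :=
  ∀ i : I, t i = none ∨ t i = s i

/-- Candidate carrier of the final coalgebra of the partial Mealy functor:
partial functions on nonempty words that are monotone in definedness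
(defined on `w` implies defined on every nonempty prefix of `w`). -/
def NuM (I O : Type u) : Type u :=
  {f : {w : List I // w ≠ []} → Option O //
    ∀ v w : {w : List I // w ≠ []}, v.1 <+: w.1 → (f w).isSome → (f v).isSome}

/-- The coalgebra structure on `NuM I O`. -/
def tauM {I O : Type u} (f : NuM I O) : MFun I O (NuM I O) := fun i =>
  match f.1 ⟨[i], by simp⟩ with
  | none => none
  | some o =>
    some (o, ⟨fun w => f.1 ⟨i :: w.1, by simp⟩, by
      intro v w hvw hw
      refine f.2 ⟨i :: v.1, by simp⟩ ⟨i :: w.1, by simp⟩ ?_ hw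
      obtain ⟨t, ht⟩ := hvw
      exact ⟨t, by simp [← ht]⟩⟩)

variable {I O C : Type u}

def goAux (c : C → MFun I O C) : C → I → List I → Option O
  | x, i, [] => (c x i).map Prod.fst
  | x, i, j :: rest => (c x i).bind fun p => goAux c p.2 j rest

theorem goAux_mono (c : C → MFun I O C) :
    ∀ (v : List I) (x : C) (i : I) (t : List I),
      (goAux c x i (v ++ t)).isSome → (goAux c x i v).isSome := by
  intro v
  induction v with
  | nil =>
    intro x i t h
    cases t with
    | nil => exact h
    | cons j rest =>
      simp only [goAux, List.nil_append] at *
      cases hc : c x i with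
      | none => simp [hc] at h
      | some p => simp [hc]
  | cons j v' ih =>
    intro x i t h
    simp only [goAux, List.cons_append] at *
    cases hc : c x i with
    | none => simp [hc] at h
    | some p =>
      simp only [hc, Option.bind_some] at h ⊢
      exact ih p.2 j t h

def hAna (c : C → MFun I O C) (x : C) : NuM I O :=
  ⟨fun w => match w with
    | ⟨i :: rest, _⟩ => goAux c x i rest,
   by
    rintro ⟨v, hv⟩ ⟨w, hw⟩ hp h
    obtain ⟨t, rfl⟩ := hp
    cases v with
    | nil => exact absurd rfl hv
    | cons i v' => exact goAux_mono c v' x i t h⟩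

/-- `(NuM I O, tauM)` is the final coalgebra of the partial Mealy functor:
every coalgebra admits a unique coalgebra morphism into it. -/
theorem stmt_12 {I O : Type u} (C : Type u) (c : C → MFun I O C) :
    ∃! h : C → NuM I O, ∀ x : C, Mmap h (c x) = tauM (h x) := by
  refine ⟨hAna c, ?_, ?_⟩
  · intro x
    funext i
    simp only [Mmap]
    cases hc : c x i with
    | none =>
      have h1 : (hAna c x).1 ⟨[i], by simp⟩ = none := by
        simp [hAna, goAux, hc]
      simp [tauM, h1]
    | some p =>
      have h1 : (hAna c x).1 ⟨[i], by simp⟩ = some p.1 := by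
        simp [hAna, goAux, hc]
      simp only [tauM, h1, Option.map_some]
      refine congrArg some (Prod.ext rfl ?_)
      apply Subtype.ext
      funext w
      match w with
      | ⟨j :: rest, _⟩ =>
        show goAux c p.2 j rest = goAux c x i (j :: rest)
        simp [goAux, hc]
  · intro h' hh'
    funext x
    -- key: values agree on all words
    have key : ∀ (rest : List I) (i : I) (x : C),
        (h' x).1 ⟨i :: rest, by simp⟩ = goAux c x i rest := by
      intro rest
      induction rest with
      | nil =>
        intro i x
        have := congrFun (hh' x) i
        simp only [Mmap, tauM] at this
        cases hc : c x i with
        | none =>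
          simp only [hc, Option.map_none] at this
          cases hf : (h' x).1 ⟨[i], by simp⟩ with
          | none => simp [goAux, hc]
          | some o => rw [hf] at this; simp at this
        | some p =>
          simp only [hc, Option.map_some] at this
          cases hf : (h' x).1 ⟨[i], by simp⟩ with
          | none => rw [hf] at this; simp at this
          | some o =>
            rw [hf] at this
            simp only [Option.some.injEq, Prod.mk.injEq, Prod.ext_iff] at this
            simp [goAux, hc, hf, this.1]
      | cons j rest' ih =>
        intro i x
        have := congrFun (hh' x) i
        simp only [Mmap, tauM] at this
        cases hc : c x i with
        | none =>
          -- then (h' x).1 ⟨[i]⟩ = none, so by monotonicity longer is none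
          simp only [hc, Option.map_none] at this
          have hf : (h' x).1 ⟨[i], by simp⟩ = none := by
            cases hf : (h' x).1 ⟨[i], by simp⟩ with
            | none => rfl
            | some o => rw [hf] at this; simp at this
          have hmono := (h' x).2 ⟨[i], by simp⟩ ⟨i :: j :: rest', by simp⟩
            ⟨j :: rest', rfl⟩
          have : (h' x).1 ⟨i :: j :: rest', by simp⟩ = none := by
            by_contra hne
            have := hmono (Option.isSome_iff_ne_none.mpr hne)
            rw [hf] at this; simp at this
          simp [this, goAux, hc]
        | some p =>
          simp only [hc, Option.map_some] at this
          cases hf : (h' x).1 ⟨[i], by simp⟩ with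
          | none => rw [hf] at this; simp at this
          | some o =>
            rw [hf] at this
            simp only [Option.some.injEq, Prod.mk.injEq, Prod.ext_iff] at this
            have htail := this.2
            have : (h' x).1 ⟨i :: j :: rest', by simp⟩ = (h' p.2).1 ⟨j :: rest', by simp⟩ := by
              conv_rhs => rw [htail]
            rw [this, ih j p.2]
            simp [goAux, hc]
    apply Subtype.ext
    funext w
    match w with
    | ⟨i :: rest, _⟩ =>
      rw [key rest i x]
      rfl
end

section
/- States x, y in a partial Mealy machine c : C → (I ⇀ O × C) are uncertain bisimilar if and only if for all nonempty words w ∈ I⁺, whenever both ⟦x⟧(w) and ⟦y⟧(w) are defined, they are equal. Here ⟦·⟧ denotes the unique morphism to the final coalgebra, i.e., ⟦x⟧(w) is the output of the last transition of the run of w from x, if the run exists. -/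
universe u

/-- The canonical relation lifting of the partial Mealy functor. -/
def MRelLift {I O X : Type u} (R : Set (X × X)) :
    Set (MFun I O X × MFun I O X) :=
  {p | ∃ t : MFun I O ↥R, Mmap (fun r : ↥R => (r : X × X).1) t = p.1 ∧
       Mmap (fun r : ↥R => (r : X × X).2) t = p.2}

/-- Uncertain bisimulation on a partial Mealy machine `c : C → M C`:
`R ⊆ (c × c)⁻¹ ((⊑) ∘ M̂(R) ∘ (⊒))`. -/
def MUncBisim {I O C : Type u} (c : C → MFun I O C) (R : Set (C × C)) : Prop :=
  ∀ p ∈ R, ∃ a b : MFun I O C,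
    Mle (c p.1) a ∧ (a, b) ∈ MRelLift R ∧ Mle (c p.2) b

/-- Final-coalgebra semantics of a state of a partial Mealy machine: `sem c w x i`
is the output of the last transition of the run of the nonempty word `i :: w`
starting in `x`, if all required transitions exist. -/
def sem {I O C : Type u} (c : C → MFun I O C) : List I → C → I → Option O
  | [], x, i => (c x i).map Prod.fst
  | j :: w, x, i =>
    match c x i with
    | none => none
    | some p => sem c w p.2 j

theorem stmt13_forward_aux {I O C : Type u} (c : C → MFun I O C) (R : Set (C × C))
    (hR : MUncBisim c R) :
    ∀ (w : List I) (x y : C), (x, y) ∈ R → ∀ (i : I) (o o' : O),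
      sem c w x i = some o → sem c w y i = some o' → o = o' := by
  intro w
  induction w with
  | nil =>
    intro x y hxy i o o' hx hy
    obtain ⟨a, b, ha, ⟨t, hta, htb⟩, hb⟩ := hR _ hxy
    replace hta : Mmap (fun r : ↥R => (r : C × C).1) t = a := hta
    replace htb : Mmap (fun r : ↥R => (r : C × C).2) t = b := htb
    simp only [sem, Option.map_eq_some_iff] at hx hy
    obtain ⟨p, hp, hpo⟩ := hx
    obtain ⟨p', hp', hpo'⟩ := hy
    have hai : a i = some p := by
      rcases ha i with h | h
      · rw [h] at hp; exact absurd hp (by simp)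
      · rw [← h, hp]
    have hbi : b i = some p' := by
      rcases hb i with h | h
      · rw [h] at hp'; exact absurd hp' (by simp)
      · rw [← h, hp']
    rw [← hta] at hai
    rw [← htb] at hbi
    simp only [Mmap, Option.map_eq_some_iff] at hai hbi
    obtain ⟨q, hq, hq1⟩ := hai
    obtain ⟨q', hq', hq1'⟩ := hbi
    rw [hq] at hq'
    have hqq : q = q' := Option.some.inj hq'
    subst hqq
    have h1 : q.1 = p.1 := congrArg Prod.fst hq1
    have h2 : q.1 = p'.1 := congrArg Prod.fst hq1'
    rw [← hpo, ← hpo', ← h1, ← h2]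
  | cons j w ih =>
    intro x y hxy i o o' hx hy
    obtain ⟨a, b, ha, ⟨t, hta, htb⟩, hb⟩ := hR _ hxy
    replace hta : Mmap (fun r : ↥R => (r : C × C).1) t = a := hta
    replace htb : Mmap (fun r : ↥R => (r : C × C).2) t = b := htb
    simp only [sem] at hx hy
    rcases hp : c x i with _ | p
    · rw [hp] at hx; simp at hx
    rcases hp' : c y i with _ | p'
    · rw [hp'] at hy; simp at hy
    rw [hp] at hx; rw [hp'] at hy
    have hai : a i = some p := by
      rcases ha i with h | h
      · rw [h] at hp; exact absurd hp (by simp)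
      · rw [← h, hp]
    have hbi : b i = some p' := by
      rcases hb i with h | h
      · rw [h] at hp'; exact absurd hp' (by simp)
      · rw [← h, hp']
    rw [← hta] at hai
    rw [← htb] at hbi
    simp only [Mmap, Option.map_eq_some_iff] at hai hbi
    obtain ⟨q, hq, hq1⟩ := hai
    obtain ⟨q', hq', hq1'⟩ := hbi
    rw [hq] at hq'
    have hqq : q = q' := Option.some.inj hq'
    subst hqq
    have h1 : (q.2 : C × C).1 = p.2 := congrArg Prod.snd hq1
    have h2 : (q.2 : C × C).2 = p'.2 := congrArg Prod.snd hq1'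
    exact ih _ _ (by rw [← h1, ← h2]; exact q.2.2) j o o' hx hy

/-- States `x, y` of a partial Mealy machine are uncertain bisimilar iff their
semantics agree on every nonempty input word on which both are defined. -/
theorem stmt_13 {I O C : Type u} (c : C → MFun I O C) (x y : C) :
    (∃ R : Set (C × C), MUncBisim c R ∧ (x, y) ∈ R) ↔
      ∀ (i : I) (w : List I) (o o' : O),
        sem c w x i = some o → sem c w y i = some o' → o = o' := by
  constructor
  · rintro ⟨R, hR, hxy⟩ i w o o' hx hy
    exact stmt13_forward_aux c R hR w x y hxy i o o' hx hy
  · intro h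
    set R : Set (C × C) :=
      {p | ∀ (i : I) (w : List I) (o o' : O),
        sem c w p.1 i = some o → sem c w p.2 i = some o' → o = o'} with hRdef
    have hrefl : ∀ z : C, (z, z) ∈ R := by
      intro z i w o o' h1 h2
      exact Option.some.inj (h1.symm.trans h2)
    refine ⟨R, ?_, h⟩
    rintro ⟨u, v⟩ hp
    have hstep : ∀ (i : I) (q q' : O × C), c u i = some q → c v i = some q' →
        (q.2, q'.2) ∈ R := by
      intro i q q' hq hq' j w o o' h1 h2
      exact hp i (j :: w) o o' (by simp [sem, hq, h1]) (by simp [sem, hq', h2])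
    have hout : ∀ (i : I) (q q' : O × C), c u i = some q → c v i = some q' →
        q.1 = q'.1 := by
      intro i q q' hq hq'
      exact hp i [] q.1 q'.1 (by simp [sem, hq]) (by simp [sem, hq'])
    classical
    let t : MFun I O ↥R := fun i =>
      match hu : c u i, hv : c v i with
      | none, none => none
      | some q, none => some (q.1, ⟨(q.2, q.2), hrefl q.2⟩)
      | none, some q' => some (q'.1, ⟨(q'.2, q'.2), hrefl q'.2⟩)
      | some q, some q' => some (q.1, ⟨(q.2, q'.2), hstep i q q' hu hv⟩)
    refine ⟨Mmap (fun r : ↥R => (r : C × C).1) t,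
            Mmap (fun r : ↥R => (r : C × C).2) t, ?_, ⟨t, rfl, rfl⟩, ?_⟩
    · intro i
      simp only [Mmap, t]
      split
      · next hu hv => left; exact hu
      · next q hu hv => right; exact hu
      · next q' hu hv => left; exact hu
      · next q q' hu hv => right; exact hu
    · intro i
      simp only [Mmap, t]
      split
      · next hu hv => left; exact hv
      · next q hu hv => left; exact hv
      · next q' hu hv => right; exact hv
      · next q q' hu hv =>
          right
          refine hv.trans ?_
          rw [hout i q q' hu hv]; rfl
end

section
/- If there is a natural transformation ⊤ : 1 → F such that ⊤_X is the greatest element of (FX, ⊑_{FX}) for every X, then in every F-coalgebra all pairs of states are uncertain bisimilar (the total relation C × C is an uncertain bisimulation). -/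
universe u

/-- `R` is an uncertain bisimulation on a coalgebra `c : C → FC` if
`R ⊆ (c × c)⁻¹ (F̂_⊑ R)`. -/
def UncBisim (F : Type u → Type u)
    (Fmap : ∀ {X Y : Type u}, (X → Y) → F X → F Y)
    (le : ∀ {X : Type u}, F X → F X → Prop)
    {C : Type u} (c : C → F C) (R : Set (C × C)) : Prop :=
  ∀ p ∈ R, (c p.1, c p.2) ∈ UncLift F (fun {X Y} => @Fmap X Y) (fun {X} => @le X) R

/-- If there is a natural transformation `⊤ : 1 → F` whose components are
greatest elements, then in every coalgebra the total relation is an uncertain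
bisimulation, and hence all pairs of states are uncertain bisimilar. -/
theorem stmt_14 (F : Type u → Type u)
    (Fmap : ∀ {X Y : Type u}, (X → Y) → F X → F Y)
    (hid : ∀ {X : Type u} (t : F X), Fmap id t = t)
    (hcomp : ∀ {X Y Z : Type u} (f : X → Y) (g : Y → Z) (t : F X),
      Fmap (g ∘ f) t = Fmap g (Fmap f t))
    (le : ∀ {X : Type u}, F X → F X → Prop)
    (hrefl : ∀ {X : Type u} (a : F X), le a a)
    (htrans : ∀ {X : Type u} (a b c : F X), le a b → le b c → le a c)
    (hanti : ∀ {X : Type u} (a b : F X), le a b → le b a → a = b)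
    (hmono : ∀ {X Y : Type u} (f : X → Y) (a b : F X), le a b → le (Fmap f a) (Fmap f b))
    (Top : ∀ X : Type u, F X)
    (htop : ∀ (X : Type u) (a : F X), le a (Top X))
    (hnat : ∀ {X Y : Type u} (f : X → Y), Fmap f (Top X) = Top Y)
    {C : Type u} (c : C → F C) :
    UncBisim F (fun {X Y} => @Fmap X Y) (fun {X} => @le X) c Set.univ ∧
      ∀ x y : C, ∃ R : Set (C × C),
        UncBisim F (fun {X Y} => @Fmap X Y) (fun {X} => @le X) c R ∧ (x, y) ∈ R := by
  have hb : UncBisim F (fun {X Y} => @Fmap X Y) (fun {X} => @le X) c Set.univ := by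
    intro p _
    refine ⟨Top C, Top C, htop _ _, ⟨Top ↥(Set.univ : Set (C × C)), ?_, ?_⟩, htop _ _⟩ <;>
      simp [hnat]
  exact ⟨hb, fun x y => ⟨Set.univ, hb, trivial⟩⟩
end

section
/- Uncertain bisimilarity is preserved by oplax coalgebra morphisms: if states x, y in (C,c) are uncertain bisimilar and h : C → D satisfies Fh(c(z)) ⊒ d(h(z)) for all z ∈ C (an oplax morphism to (D,d)), then h(x) and h(y) are uncertain bisimilar in (D,d). -/
universe u

/-- Uncertain bisimilarity is preserved by oplax coalgebra morphisms: if
`h : (C,c) ⇀ (D,d)` is oplax (`Fh(c z) ⊒ d(h z)` for all `z`) and `x, y` are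
uncertain bisimilar in `(C,c)`, then `h x, h y` are uncertain bisimilar in `(D,d)`. -/
theorem stmt_17 (F : Type u → Type u)
    (Fmap : ∀ {X Y : Type u}, (X → Y) → F X → F Y)
    (hid : ∀ {X : Type u} (t : F X), Fmap id t = t)
    (hcomp : ∀ {X Y Z : Type u} (f : X → Y) (g : Y → Z) (t : F X),
      Fmap (g ∘ f) t = Fmap g (Fmap f t))
    (le : ∀ {X : Type u}, F X → F X → Prop)
    (hrefl : ∀ {X : Type u} (a : F X), le a a)
    (htrans : ∀ {X : Type u} (a b c : F X), le a b → le b c → le a c)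
    (hanti : ∀ {X : Type u} (a b : F X), le a b → le b a → a = b)
    (hmono : ∀ {X Y : Type u} (f : X → Y) (a b : F X), le a b → le (Fmap f a) (Fmap f b))
    {C D : Type u} (c : C → F C) (d : D → F D) (h : C → D)
    (hop : ∀ z : C, le (d (h z)) (Fmap h (c z)))
    (x y : C)
    (hxy : ∃ R : Set (C × C),
      UncBisim F (fun {X Y} => @Fmap X Y) (fun {X} => @le X) c R ∧ (x, y) ∈ R) :
    ∃ S : Set (D × D),
      UncBisim F (fun {X Y} => @Fmap X Y) (fun {X} => @le X) d S ∧ (h x, h y) ∈ S := by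
  obtain ⟨R, hR, hxyR⟩ := hxy
  refine ⟨{q | ∃ p ∈ R, (h p.1, h p.2) = q}, ?_, ⟨(x, y), hxyR, rfl⟩⟩
  rintro q ⟨p, hp, rfl⟩
  obtain ⟨a, b, h1, ⟨t, ht1, ht2⟩, h2⟩ := hR p hp
  set S : Set (D × D) := {q | ∃ p ∈ R, (h p.1, h p.2) = q}
  let f : ↥R → ↥S := fun r => ⟨(h (r : C × C).1, h (r : C × C).2), ⟨r, r.2, rfl⟩⟩
  refine ⟨Fmap h a, Fmap h b, ?_, ⟨Fmap f t, ?_, ?_⟩, ?_⟩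
  · exact htrans _ _ _ (hop p.1) (hmono h _ _ h1)
  · show Fmap (fun r : ↥S => (r : D × D).1) (Fmap f t) = Fmap h a
    rw [← hcomp]
    have : ((fun r : ↥S => (r : D × D).1) ∘ f) = (h ∘ fun r : ↥R => (r : C × C).1) := rfl
    rw [this, hcomp]
    exact congrArg _ ht1
  · show Fmap (fun r : ↥S => (r : D × D).2) (Fmap f t) = Fmap h b
    rw [← hcomp]
    have : ((fun r : ↥S => (r : D × D).2) ∘ f) = (h ∘ fun r : ↥R => (r : C × C).2) := rfl
    rw [this, hcomp]
    exact congrArg _ ht2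
  · exact htrans _ _ _ (hop p.2) (hmono h _ _ h2)
end

section
/- Suppose the ordered functor F is stable, i.e., F̂_⊑((f × f)⁻¹(S)) = (Ff × Ff)⁻¹(F̂_⊑(S)) for all maps f and all reflexive relations S. Then every lax coalgebra morphism h : (C,c) → (D,d) (meaning Fh(c(x)) ⊑ d(h(x)) for all x) reflects uncertain bisimulations: if R ⊆ D × D is a reflexive uncertain bisimulation on (D,d), then (h × h)⁻¹(R) is an uncertain bisimulation on (C,c). In particular ker h = (h × h)⁻¹(Eq_D) is an uncertain bisimulation on (C,c). -/
universe u

/-- Stability implies that lax coalgebra morphisms reflect (reflexive)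
uncertain bisimulations; in particular the kernel of a lax coalgebra morphism
is an uncertain bisimulation. -/
theorem stmt_18 (F : Type u → Type u)
    (Fmap : ∀ {X Y : Type u}, (X → Y) → F X → F Y)
    (hid : ∀ {X : Type u} (t : F X), Fmap id t = t)
    (hcomp : ∀ {X Y Z : Type u} (f : X → Y) (g : Y → Z) (t : F X),
      Fmap (g ∘ f) t = Fmap g (Fmap f t))
    (le : ∀ {X : Type u}, F X → F X → Prop)
    (hrefl : ∀ {X : Type u} (a : F X), le a a)
    (htrans : ∀ {X : Type u} (a b c : F X), le a b → le b c → le a c)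
    (hanti : ∀ {X : Type u} (a b : F X), le a b → le b a → a = b)
    (hmono : ∀ {X Y : Type u} (f : X → Y) (a b : F X), le a b → le (Fmap f a) (Fmap f b))
    (hstable : ∀ {X Y : Type u} (f : X → Y) (S : Set (Y × Y)), (∀ y : Y, (y, y) ∈ S) →
      UncLift F (fun {X Y} => @Fmap X Y) (fun {X} => @le X) (Prod.map f f ⁻¹' S) =
        Prod.map (Fmap f) (Fmap f) ⁻¹'
          UncLift F (fun {X Y} => @Fmap X Y) (fun {X} => @le X) S)
    {C D : Type u} (c : C → F C) (d : D → F D) (h : C → D)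
    (hlax : ∀ x : C, le (Fmap h (c x)) (d (h x))) :
    (∀ R : Set (D × D), (∀ z : D, (z, z) ∈ R) →
      UncBisim F (fun {X Y} => @Fmap X Y) (fun {X} => @le X) d R →
      UncBisim F (fun {X Y} => @Fmap X Y) (fun {X} => @le X) c (Prod.map h h ⁻¹' R)) ∧
    UncBisim F (fun {X Y} => @Fmap X Y) (fun {X} => @le X) c
      {p : C × C | h p.1 = h p.2} := by

  have main : ∀ R : Set (D × D), (∀ z : D, (z, z) ∈ R) →
      UncBisim F (fun {X Y} => @Fmap X Y) (fun {X} => @le X) d R →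
      UncBisim F (fun {X Y} => @Fmap X Y) (fun {X} => @le X) c (Prod.map h h ⁻¹' R) := by
    intro R hR hbis p hp
    rw [hstable h R hR]
    obtain ⟨a, b, h1, h2, h3⟩ := hbis (h p.1, h p.2) hp
    exact ⟨a, b, htrans _ _ _ (hlax p.1) h1, h2, htrans _ _ _ (hlax p.2) h3⟩
  refine ⟨main, ?_⟩
  have heq : {p : C × C | h p.1 = h p.2} =
      Prod.map h h ⁻¹' {q : D × D | q.1 = q.2} := rfl
  rw [heq]
  apply main
  · intro z; rfl
  · intro q hq
    refine ⟨d q.1, d q.1, hrefl _, ⟨Fmap (fun z : D => (⟨(z, z), rfl⟩ : ↥{q : D × D | q.1 = q.2})) (d q.1), ?_, ?_⟩, ?_⟩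
    · exact (hcomp _ _ _).symm.trans (hid _)
    · exact (hcomp _ _ _).symm.trans (hid _)
    · have : q.1 = q.2 := hq
      rw [← this]; exact hrefl _
end
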